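/- Let G and H be simple graphs with |E(H)| ≥ 6, and suppose the maximum degree of G is at most 2·δ(H) − ⌊|E(H)|/3⌋. Then the H-edge-conflict graph of G is claw-free; that is, there do not exist four subgraphs H*, H₁, H₂, H₃ of G, each isomorphic to H, such that H* shares an edge with each of H₁, H₂, H₃, but H₁, H₂, H₃ are pairwise edge-disjoint. -/

import Mathlib

open SimpleGraph

set_option linter.unusedSectionVars false

section AuxEdgeConflict

variable {V W : Type*} [Fintype V] [Fintype W] [Nonempty W]
variable {G : SimpleGraph V} {H : SimpleGraph W}

/-- Every vertex of a subgraph isomorphic to `H` has at least `δ(H)` neighbors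
in the subgraph. -/
private lemma ecf_deg_ge [DecidableRel H.Adj] (Hs : G.Subgraph) (f : Hs.coe ≃g H)
    {u : V} (hu : u ∈ Hs.verts) : H.minDegree ≤ (Hs.neighborSet u).ncard := by
  classical
  have e1 : H.minDegree ≤ H.degree (f ⟨u, hu⟩) := H.minDegree_le_degree _
  have e2 : H.degree (f ⟨u, hu⟩) = (Hs.neighborSet u).ncard := by
    rw [← card_neighborSet_eq_degree, ← Nat.card_eq_fintype_card,
      ← Nat.card_coe_set_eq]
    exact Nat.card_congr ((f.mapNeighborSet ⟨u, hu⟩).symm.trans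
      (Subgraph.coeNeighborSetEquiv ⟨u, hu⟩))
  omega

/-- A subgraph isomorphic to `H` has exactly `|E(H)|` edges. -/
private lemma ecf_edge_card [DecidableEq W] [DecidableRel H.Adj]
    (Hs : G.Subgraph) (f : Hs.coe ≃g H) :
    Hs.edgeSet.ncard = H.edgeFinset.card := by
  classical
  have h1 : Hs.edgeSet = Sym2.map (↑) '' Hs.coe.edgeSet :=
    (Subgraph.image_coe_edgeSet_coe Hs).symm
  rw [h1, Set.ncard_image_of_injective _ (Sym2.map.injective Subtype.val_injective),
    ← Nat.card_coe_set_eq, Nat.card_congr f.mapEdgeSet,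
    Nat.card_coe_set_eq, Set.ncard_eq_toFinset_card']
  congr 1

/-- Key lemma: a subgraph sharing an edge with an `H`-copy must share many edges. -/
private lemma ecf_key [DecidableEq W] [DecidableRel G.Adj] [DecidableRel H.Adj]
    (hdeg : (G.maxDegree : ℤ) ≤ 2 * (H.minDegree : ℤ) - ((H.edgeFinset.card / 3 : ℕ) : ℤ))
    (Hs Hi : G.Subgraph) (fs : Hs.coe ≃g H) (fi : Hi.coe ≃g H)
    (he : (Hs.edgeSet ∩ Hi.edgeSet).Nonempty) :
    2 * (H.edgeFinset.card / 3) ≤ (Hs.edgeSet ∩ Hi.edgeSet).ncard + 1 := by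
  classical
  obtain ⟨e, hes, hei⟩ := he
  induction e using Sym2.ind with
  | _ u v =>
  set S : Set (Sym2 V) := Hs.edgeSet ∩ Hi.edgeSet with hS
  have hadjs : Hs.Adj u v := hes
  have hadji : Hi.Adj u v := hei
  have hne : u ≠ v := G.ne_of_adj hadjs.adj_sub
  set k := H.edgeFinset.card / 3 with hk
  -- Step 1: many common neighbors at each endpoint of the shared edge.
  have step1 : ∀ w : V, w ∈ Hs.verts → w ∈ Hi.verts →
      k ≤ (Hs.neighborSet w ∩ Hi.neighborSet w).ncard := by
    intro w hws hwi
    have h1 := ecf_deg_ge Hs fs hws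
    have h2 := ecf_deg_ge Hi fi hwi
    have hsub : Hs.neighborSet w ∪ Hi.neighborSet w ⊆ G.neighborSet w :=
      Set.union_subset (Hs.neighborSet_subset w) (Hi.neighborSet_subset w)
    have hcard : (Hs.neighborSet w ∪ Hi.neighborSet w).ncard
        + (Hs.neighborSet w ∩ Hi.neighborSet w).ncard
        = (Hs.neighborSet w).ncard + (Hi.neighborSet w).ncard :=
      Set.ncard_union_add_ncard_inter _ _ (Set.toFinite _) (Set.toFinite _)
    have hle : (Hs.neighborSet w ∪ Hi.neighborSet w).ncard ≤ G.degree w := by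
      rw [← card_neighborSet_eq_degree, ← Nat.card_eq_fintype_card,
        Nat.card_coe_set_eq]
      exact Set.ncard_le_ncard hsub (Set.toFinite _)
    have hmax : G.degree w ≤ G.maxDegree := G.degree_le_maxDegree w
    omega
  -- Step 2: many shared edges at each endpoint.
  have step2 : ∀ w : V, w ∈ Hs.verts → w ∈ Hi.verts →
      k ≤ ({e' | e' ∈ S ∧ w ∈ e'}).ncard := by
    intro w hws hwi
    refine le_trans (step1 w hws hwi) ?_
    refine Set.ncard_le_ncard_of_injOn (fun x => s(w, x)) ?_ ?_ (Set.toFinite _)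
    · rintro x ⟨hxs, hxi⟩
      exact ⟨⟨hxs, hxi⟩, Sym2.mem_mk_left w x⟩
    · rintro x ⟨hxs, -⟩ y ⟨hys, -⟩ hxy
      have hxw : w ≠ x := G.ne_of_adj (Subgraph.Adj.adj_sub hxs)
      rcases Sym2.eq_iff.mp hxy with ⟨-, h⟩ | ⟨h1, h2⟩
      · exact h
      · exact absurd h2.symm hxw
  -- Step 3: combine the two endpoints.
  have hus : u ∈ Hs.verts := hadjs.fst_mem
  have hvs : v ∈ Hs.verts := hadjs.snd_mem
  have hui : u ∈ Hi.verts := hadji.fst_mem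
  have hvi : v ∈ Hi.verts := hadji.snd_mem
  set Au : Set (Sym2 V) := {e' | e' ∈ S ∧ u ∈ e'} with hAu
  set Av : Set (Sym2 V) := {e' | e' ∈ S ∧ v ∈ e'} with hAv
  have hUnion : Au ∪ Av ⊆ S := by
    rintro e' (⟨h, -⟩ | ⟨h, -⟩) <;> exact h
  have hInter : Au ∩ Av ⊆ {s(u, v)} := by
    rintro e' ⟨⟨-, hu'⟩, ⟨-, hv'⟩⟩
    exact (Sym2.mem_and_mem_iff hne).mp ⟨hu', hv'⟩
  have hc1 : (Au ∪ Av).ncard + (Au ∩ Av).ncard = Au.ncard + Av.ncard :=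
    Set.ncard_union_add_ncard_inter _ _ (Set.toFinite _) (Set.toFinite _)
  have hc2 : (Au ∪ Av).ncard ≤ S.ncard := Set.ncard_le_ncard hUnion (Set.toFinite _)
  have hc3 : (Au ∩ Av).ncard ≤ 1 := by
    have := Set.ncard_le_ncard hInter (Set.toFinite _)
    simpa using this
  have h2u := step2 u hus hui
  have h2v := step2 v hvs hvi
  rw [← hAu] at h2u
  rw [← hAv] at h2v
  omega

end AuxEdgeConflict

/-- If `|E(H)| ≥ 6` and `Δ(G) ≤ 2·δ(H) − ⌊|E(H)|/3⌋` (as integers),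
then the `H`-edge-conflict graph of `G` is claw-free: there are no subgraphs
`Hs, H1, H2, H3` of `G`, each isomorphic to `H`, with `Hs` sharing an edge with
each `Hᵢ` while `H1, H2, H3` are pairwise edge-disjoint. -/
theorem edge_conflict_claw_free
    {V W : Type*} [Fintype V] [Fintype W] [Nonempty W] [DecidableEq W]
    (G : SimpleGraph V) (H : SimpleGraph W)
    [DecidableRel G.Adj] [DecidableRel H.Adj]
    (hE : 6 ≤ H.edgeFinset.card)
    (hdeg : (G.maxDegree : ℤ) ≤ 2 * (H.minDegree : ℤ) - ((H.edgeFinset.card / 3 : ℕ) : ℤ)) :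
    ¬ ∃ (Hs H1 H2 H3 : G.Subgraph),
        Nonempty (Hs.coe ≃g H) ∧ Nonempty (H1.coe ≃g H) ∧
        Nonempty (H2.coe ≃g H) ∧ Nonempty (H3.coe ≃g H) ∧
        (Hs.edgeSet ∩ H1.edgeSet).Nonempty ∧
        (Hs.edgeSet ∩ H2.edgeSet).Nonempty ∧
        (Hs.edgeSet ∩ H3.edgeSet).Nonempty ∧
        Disjoint H1.edgeSet H2.edgeSet ∧
        Disjoint H1.edgeSet H3.edgeSet ∧
        Disjoint H2.edgeSet H3.edgeSet := by
  classical
  rintro ⟨Hs, H1, H2, H3, ⟨fs⟩, ⟨f1⟩, ⟨f2⟩, ⟨f3⟩, hn1, hn2, hn3, d12, d13, d23⟩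
  set S1 : Set (Sym2 V) := Hs.edgeSet ∩ H1.edgeSet with hS1
  set S2 : Set (Sym2 V) := Hs.edgeSet ∩ H2.edgeSet with hS2
  set S3 : Set (Sym2 V) := Hs.edgeSet ∩ H3.edgeSet with hS3
  have k1 := ecf_key hdeg Hs H1 fs f1 hn1
  have k2 := ecf_key hdeg Hs H2 fs f2 hn2
  have k3 := ecf_key hdeg Hs H3 fs f3 hn3
  rw [← hS1] at k1
  rw [← hS2] at k2
  rw [← hS3] at k3
  have hd12 : Disjoint S1 S2 :=
    Set.disjoint_of_subset Set.inter_subset_right Set.inter_subset_right d12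
  have hd13 : Disjoint S1 S3 :=
    Set.disjoint_of_subset Set.inter_subset_right Set.inter_subset_right d13
  have hd23 : Disjoint S2 S3 :=
    Set.disjoint_of_subset Set.inter_subset_right Set.inter_subset_right d23
  have hsum : S1.ncard + S2.ncard + S3.ncard ≤ Hs.edgeSet.ncard := by
    have h12 : (S1 ∪ S2).ncard = S1.ncard + S2.ncard :=
      Set.ncard_union_eq hd12 (Set.toFinite _) (Set.toFinite _)
    have h123 : ((S1 ∪ S2) ∪ S3).ncard = (S1 ∪ S2).ncard + S3.ncard :=
      Set.ncard_union_eq (Set.disjoint_union_left.mpr ⟨hd13, hd23⟩)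
        (Set.toFinite _) (Set.toFinite _)
    have hsub : (S1 ∪ S2) ∪ S3 ⊆ Hs.edgeSet := by
      rintro e ((⟨h, -⟩ | ⟨h, -⟩) | ⟨h, -⟩) <;> exact h
    calc S1.ncard + S2.ncard + S3.ncard = ((S1 ∪ S2) ∪ S3).ncard := by omega
      _ ≤ Hs.edgeSet.ncard := Set.ncard_le_ncard hsub (Set.toFinite _)
  rw [ecf_edge_card Hs fs] at hsum
  omega
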